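/- arXiv:1712.09597 — 2 statements merged into one kernel-verified Lean document; each statement's English description precedes it below -/
import Mathlib

section
/- The 4-stage commutator-free scheme with c = (0, 1/2, 1/2, 1), a_21 = 1/2, a_32 = 1/2, a_4 = (0, 0, 1) (realized via the two rows α_{4,1} = (1/2, 0, 0), α_{4,2} = (−1/2, 0, 1)), β_1 = (1/4, 1/6, 1/6, −1/12), β_2 = (−1/12, 1/6, 1/6, 1/4), and b = β_1 + β_2 = (1/6, 1/3, 1/3, 1/6), satisfies: the classical order-4 Runge–Kutta conditions ∑ b_k = 1, ∑ b_k c_k = 1/2, ∑ b_k c_k² = 1/3, ∑_{i,j} b_i a_{ij} c_j = 1/6, ∑ b_k c_k³ = 1/4, ∑_{i,j} b_i c_i a_{ij} c_j = 1/8, ∑_{i,j} b_i a_{ij} c_j² = 1/12, ∑_{i,j,k} b_i a_{ij} a_{jk} c_k = 1/24; the non-classical third-order condition ∑_k β_1^k c_k + (1/2)∑_k β_2^k = 1/3; and the non-classical fourth-order conditions ∑_k β_1^k c_k + (1/3)∑_k β_2^k = 1/4, ∑_k β_1^k c_k² + (1/3)∑_k β_2^k = 1/6, and ∑_{j,k}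 β_1^k a_{kj} c_j + (1/6)∑_k β_2^k = 1/12. -/
open Finset

/-- The 4-stage commutator-free scheme of Owren extending the classical RK4 method:
with `c = (0, 1/2, 1/2, 1)`, `a₂₁ = 1/2`, `a₃₂ = 1/2`, fourth stage row
`a₄ = (0, 0, 1)` realized via `α₄₁ = (1/2, 0, 0)` and `α₄₂ = (-1/2, 0, 1)`,
`β₁ = (1/4, 1/6, 1/6, -1/12)`, `β₂ = (-1/12, 1/6, 1/6, 1/4)`,
`b = β₁ + β₂ = (1/6, 1/3, 1/3, 1/6)`, the classical order-4 conditions, the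
non-classical third-order condition, and the non-classical fourth-order conditions
all hold. -/
theorem cf4_owren_scheme_order_conditions
    (a : Fin 4 → Fin 4 → ℝ) (α41 α42 c b β1 β2 : Fin 4 → ℝ)
    (ha : a = ![![0, 0, 0, 0], ![1/2, 0, 0, 0], ![0, 1/2, 0, 0], ![0, 0, 1, 0]])
    (hα41 : α41 = ![1/2, 0, 0, 0]) (hα42 : α42 = ![-1/2, 0, 1, 0])
    (hc : c = ![0, 1/2, 1/2, 1])
    (hβ1 : β1 = ![1/4, 1/6, 1/6, -1/12])
    (hβ2 : β2 = ![-1/12, 1/6, 1/6, 1/4])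
    (hb : b = fun k => β1 k + β2 k) :
    (∀ j, a 3 j = α41 j + α42 j) ∧
    b = ![1/6, 1/3, 1/3, 1/6] ∧
    (∑ k, b k = 1) ∧
    (∑ k, b k * c k = 1 / 2) ∧
    (∑ k, b k * c k ^ 2 = 1 / 3) ∧
    (∑ i, ∑ j, b i * a i j * c j = 1 / 6) ∧
    (∑ k, b k * c k ^ 3 = 1 / 4) ∧
    (∑ i, ∑ j, b i * c i * a i j * c j = 1 / 8) ∧
    (∑ i, ∑ j, b i * a i j * c j ^ 2 = 1 / 12) ∧
    (∑ i, ∑ j, ∑ k, b i * a i j * a j k * c k = 1 / 24) ∧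
    (∑ k, β1 k * c k + (1 / 2) * ∑ k, β2 k = 1 / 3) ∧
    (∑ k, β1 k * c k + (1 / 3) * ∑ k, β2 k = 1 / 4) ∧
    (∑ k, β1 k * c k ^ 2 + (1 / 3) * ∑ k, β2 k = 1 / 6) ∧
    (∑ k, ∑ j, β1 k * a k j * c j + (1 / 6) * ∑ k, β2 k = 1 / 12) := by
  subst ha hα41 hα42 hc hβ1 hβ2 hb
  refine ⟨fun j => by fin_cases j <;> norm_num [Matrix.vecHead, Matrix.vecTail, Matrix.cons_val_two, Matrix.cons_val_three], ?_, ?_⟩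
  · funext k; fin_cases k <;> norm_num
  · simp only [Fin.sum_univ_four]
    norm_num [Matrix.vecHead, Matrix.vecTail, Matrix.cons_val_two, Matrix.cons_val_three]
end

section
/- The polynomial 144z⁵ + 90z⁴ − 3z³ − 13z² − 5z − 1 has exactly one real root, i.e. there exists a unique ω ∈ ℝ with 144ω⁵ + 90ω⁴ − 3ω³ − 13ω² − 5ω − 1 = 0. -/
/-- For `x ≤ 3/10` the quintic is negative. -/
lemma cf43_neg_left {x : ℝ} (hx : x ≤ 3/10) :
    144 * x ^ 5 + 90 * x ^ 4 - 3 * x ^ 3 - 13 * x ^ 2 - 5 * x - 1 < 0 := by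
  have ht : (0:ℝ) ≤ 3/10 - x := by linarith
  nlinarith [mul_nonneg ht (sq_nonneg (12*(3/10-x)^2 - 51/4*(3/10-x) + 1921/640)),
    sq_nonneg ((3/10-x) - 3/4), sq_nonneg (3/10 - x), sq_nonneg ((3/10-x) - 7/10)]

/-- Strict monotonicity beyond 3/10: difference of values factors positively. -/
lemma cf43_inj {x y : ℝ} (hx : 3/10 < x) (hy : 3/10 < y)
    (h : 144 * x ^ 5 + 90 * x ^ 4 - 3 * x ^ 3 - 13 * x ^ 2 - 5 * x - 1 =
         144 * y ^ 5 + 90 * y ^ 4 - 3 * y ^ 3 - 13 * y ^ 2 - 5 * y - 1) : x = y := by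
  by_contra hne
  have hu : (0:ℝ) ≤ x - 3/10 := by linarith
  have hv : (0:ℝ) ≤ y - 3/10 := by linarith
  have hS : (0:ℝ) < 144*(y^4+y^3*x+y^2*x^2+y*x^3+x^4) + 90*(y^3+y^2*x+y*x^2+x^3)
      - 3*(y^2+y*x+x^2) - 13*(x+y) - 5 := by
    nlinarith [mul_nonneg hu hv,
      mul_nonneg (mul_nonneg hu hu) hv, mul_nonneg (mul_nonneg hu hv) hv,
      mul_nonneg (mul_nonneg hu hu) (mul_nonneg hu hv),
      mul_nonneg (mul_nonneg hu hv) (mul_nonneg hv hv),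
      mul_nonneg (mul_nonneg hu hu) (mul_nonneg hv hv),
      mul_nonneg hu (mul_nonneg hu hu), mul_nonneg hv (mul_nonneg hv hv),
      mul_nonneg (mul_nonneg hu hu) (mul_nonneg hu hu),
      mul_nonneg (mul_nonneg hv hv) (mul_nonneg hv hv),
      mul_nonneg (mul_nonneg hu hu) hu, mul_nonneg (mul_nonneg hv hv) hv]
  rcases lt_or_gt_of_ne hne with hlt | hlt
  · nlinarith [mul_pos (sub_pos.mpr hlt) hS]
  · nlinarith [mul_pos (sub_pos.mpr hlt) hS]

/-- The quintic `144 z⁵ + 90 z⁴ - 3 z³ - 13 z² - 5 z - 1` has exactly one real root. -/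
theorem cf43_quintic_unique_real_root :
    ∃! ω : ℝ, 144 * ω ^ 5 + 90 * ω ^ 4 - 3 * ω ^ 3 - 13 * ω ^ 2 - 5 * ω - 1 = 0 := by
  have hcont : ContinuousOn
      (fun x : ℝ => 144 * x ^ 5 + 90 * x ^ 4 - 3 * x ^ 3 - 13 * x ^ 2 - 5 * x - 1)
      (Set.Icc 0 1) := by fun_prop
  have hmem : (0:ℝ) ∈ Set.Icc
      (144 * (0:ℝ) ^ 5 + 90 * 0 ^ 4 - 3 * 0 ^ 3 - 13 * 0 ^ 2 - 5 * 0 - 1)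
      (144 * (1:ℝ) ^ 5 + 90 * 1 ^ 4 - 3 * 1 ^ 3 - 13 * 1 ^ 2 - 5 * 1 - 1) := by
    norm_num
  obtain ⟨ω, hω, hωeq⟩ := intermediate_value_Icc (by norm_num : (0:ℝ) ≤ 1) hcont hmem
  refine ⟨ω, hωeq.symm ▸ rfl, ?_⟩
  · intro y hy
    have hroot : 144 * ω ^ 5 + 90 * ω ^ 4 - 3 * ω ^ 3 - 13 * ω ^ 2 - 5 * ω - 1 = 0 :=
      hωeq
    have hωgt : 3/10 < ω := by
      by_contra h
      exact absurd hroot (ne_of_lt (cf43_neg_left (le_of_not_gt h)))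
    have hygt : 3/10 < y := by
      by_contra h
      exact absurd hy (ne_of_lt (cf43_neg_left (le_of_not_gt h)))
    exact cf43_inj hygt hωgt (by rw [hy, hroot])
end
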